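/- For all ρ > 0, β > 0 and z > 0, the Wright function satisfies Γ(β+ρ)·φ(ρ, β+ρ; z) ≤ Γ(β)·φ(ρ, β; z). -/

import Mathlib

noncomputable def wrightGen (ρ β z : ℝ) : ℝ :=
  ∑' k : ℕ, z ^ k / (k.factorial * Real.Gamma (ρ * k + β))

open Real

lemma gamma_cross (ρ x y : ℝ) (hρ : 0 ≤ ρ) (hx : 0 < x) (hxy : x ≤ y) :
    Real.Gamma (x + ρ) * Real.Gamma y ≤ Real.Gamma x * Real.Gamma (y + ρ) := by
  rcases eq_or_lt_of_le hρ with h0 | hρ'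
  · simp [← h0, mul_comm]
  have hy : 0 < y := lt_of_lt_of_le hx hxy
  have hd : 0 < y + ρ - x := by linarith
  set t : ℝ := ρ / (y + ρ - x) with ht
  set s : ℝ := (y - x) / (y + ρ - x) with hs
  have hts : t + s = 1 := by rw [ht, hs, ← add_div, div_eq_one_iff_eq hd.ne']; ring
  have htpos : 0 ≤ t := div_nonneg hρ hd.le
  have hspos : 0 ≤ s := div_nonneg (by linarith) hd.le
  have hC := Real.convexOn_log_Gamma
  have h1 : (Real.log ∘ Real.Gamma) (x + ρ) ≤
      s * (Real.log ∘ Real.Gamma) x + t * (Real.log ∘ Real.Gamma) (y + ρ) := by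
    have := hC.2 (Set.mem_Ioi.mpr hx) (Set.mem_Ioi.mpr (by linarith : (0:ℝ) < y + ρ))
      hspos htpos (by linarith)
    have hpt : s • x + t • (y + ρ) = x + ρ := by
      rw [smul_eq_mul, smul_eq_mul, hs, ht, div_mul_eq_mul_div, div_mul_eq_mul_div, ← add_div, div_eq_iff hd.ne']; ring
    rwa [hpt] at this
  have h2 : (Real.log ∘ Real.Gamma) y ≤
      t * (Real.log ∘ Real.Gamma) x + s * (Real.log ∘ Real.Gamma) (y + ρ) := by
    have := hC.2 (Set.mem_Ioi.mpr hx) (Set.mem_Ioi.mpr (by linarith : (0:ℝ) < y + ρ))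
      htpos hspos hts
    have hpt : t • x + s • (y + ρ) = y := by
      rw [smul_eq_mul, smul_eq_mul, hs, ht, div_mul_eq_mul_div, div_mul_eq_mul_div, ← add_div, div_eq_iff hd.ne']; ring
    rwa [hpt] at this
  have hsum : Real.log (Real.Gamma (x + ρ)) + Real.log (Real.Gamma y) ≤
      Real.log (Real.Gamma x) + Real.log (Real.Gamma (y + ρ)) := by
    have h := add_le_add h1 h2
    simp only [Function.comp] at h
    have e : s * Real.log (Real.Gamma x) + t * Real.log (Real.Gamma (y + ρ)) +
        (t * Real.log (Real.Gamma x) + s * Real.log (Real.Gamma (y + ρ))) =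
        (t + s) * (Real.log (Real.Gamma x) + Real.log (Real.Gamma (y + ρ))) := by ring
    rw [e, hts, one_mul] at h
    linarith
  have hGxρ := Real.Gamma_pos_of_pos (by linarith : (0:ℝ) < x + ρ)
  have hGy := Real.Gamma_pos_of_pos hy
  have hGx := Real.Gamma_pos_of_pos hx
  have hGyρ := Real.Gamma_pos_of_pos (by linarith : (0:ℝ) < y + ρ)
  calc Real.Gamma (x + ρ) * Real.Gamma y
      = Real.exp (Real.log (Real.Gamma (x + ρ)) + Real.log (Real.Gamma y)) := by
        rw [Real.exp_add, Real.exp_log hGxρ, Real.exp_log hGy]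
    _ ≤ Real.exp (Real.log (Real.Gamma x) + Real.log (Real.Gamma (y + ρ))) :=
        Real.exp_le_exp.mpr hsum
    _ = Real.Gamma x * Real.Gamma (y + ρ) := by
        rw [Real.exp_add, Real.exp_log hGx, Real.exp_log hGyρ]

lemma wright_summable (ρ β z : ℝ) (hρ : 0 < ρ) (hβ : 0 < β) (hz : 0 ≤ z) :
    Summable (fun k : ℕ => z ^ k / (k.factorial * Real.Gamma (ρ * k + β))) := by
  apply Summable.of_norm_bounded_eventually_nat (g := fun k => z ^ k / k.factorial)
    (Real.summable_pow_div_factorial z)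
  have : ∀ᶠ k : ℕ in Filter.atTop, (2 : ℝ) ≤ ρ * k + β := by
    have := Filter.tendsto_atTop.mp
      (Filter.tendsto_atTop_add_const_right Filter.atTop β
        ((tendsto_natCast_atTop_atTop (R := ℝ)).const_mul_atTop hρ)) 2
    exact this
  filter_upwards [this] with k hk
  have hG1 : (1 : ℝ) ≤ Real.Gamma (ρ * k + β) := by
    have := Real.Gamma_strictMonoOn_Ici.monotoneOn (Set.mem_Ici.mpr le_rfl)
      (Set.mem_Ici.mpr hk) hk
    rwa [Real.Gamma_two] at this
  have hfac : (0:ℝ) < k.factorial := Nat.cast_pos.mpr k.factorial_pos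
  have hnum : (0:ℝ) ≤ z ^ k := pow_nonneg hz k
  rw [Real.norm_eq_abs, abs_of_nonneg (by positivity)]
  apply div_le_div_of_nonneg_left hnum (by positivity)
  · nlinarith [hfac]

theorem stmt_0 (ρ β z : ℝ) (hρ : 0 < ρ) (hβ : 0 < β) (hz : 0 < z) :
    Real.Gamma (β + ρ) * wrightGen ρ (β + ρ) z ≤ Real.Gamma β * wrightGen ρ β z := by
  unfold wrightGen
  rw [← tsum_mul_left, ← tsum_mul_left]
  apply Summable.tsum_le_tsum _ ((wright_summable ρ (β + ρ) z hρ (by linarith) hz.le).mul_left _)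
    ((wright_summable ρ β z hρ hβ hz.le).mul_left _)
  intro k
  have hyk : β ≤ ρ * k + β := le_add_of_nonneg_left (by positivity)
  have hcross := gamma_cross ρ β (ρ * k + β) hρ.le hβ hyk
  have hGb := Real.Gamma_pos_of_pos hβ
  have hGk := Real.Gamma_pos_of_pos (by positivity : (0:ℝ) < ρ * k + β)
  have hGbr := Real.Gamma_pos_of_pos (by linarith : (0:ℝ) < β + ρ)
  have hGkr := Real.Gamma_pos_of_pos (by positivity : (0:ℝ) < ρ * k + β + ρ)
  have hfac : (0:ℝ) < k.factorial := Nat.cast_pos.mpr k.factorial_pos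
  have hratio : Real.Gamma (β + ρ) / Real.Gamma (ρ * k + (β + ρ)) ≤
      Real.Gamma β / Real.Gamma (ρ * k + β) := by
    rw [show ρ * k + (β + ρ) = ρ * k + β + ρ by ring]
    rw [div_le_div_iff₀ hGkr hGk]
    nlinarith [hcross]
  have hzk : (0:ℝ) ≤ z ^ k := pow_nonneg hz.le k
  calc Real.Gamma (β + ρ) * (z ^ k / (k.factorial * Real.Gamma (ρ * k + (β + ρ))))
      = (z ^ k / k.factorial) * (Real.Gamma (β + ρ) / Real.Gamma (ρ * k + (β + ρ))) := by
        field_simp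
    _ ≤ (z ^ k / k.factorial) * (Real.Gamma β / Real.Gamma (ρ * k + β)) := by
        apply mul_le_mul_of_nonneg_left hratio (by positivity)
    _ = Real.Gamma β * (z ^ k / (k.factorial * Real.Gamma (ρ * k + β))) := by
        field_simp
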